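/- arXiv:2506.02337 — 3 statements merged into one kernel-verified Lean document; each statement's English description precedes it below -/
import Mathlib

section
/- Let H be an RKHS with kernel K on Ω, f ∈ H, points x₁,…,x_N, x ∈ Ω, σ² > 0, A = K(X,X)+σ²I, and φ(x)ᵀ = K(x,X)A⁻¹. Then the deterministic prediction error satisfies |f(x) − Σᵢ φᵢ(x) f(xᵢ)| ≤ σ(x)·‖f‖_H, where σ(x)² = K(x,x) − K(x,X)A⁻¹K(X,x). -/
open Matrix
open scoped RealInnerProductSpace

/-- Deterministic GP prediction error bound: with `φ(x) = A⁻¹ K(X,x)`,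
`|f(x) − Σᵢ φᵢ(x) f(xᵢ)| ≤ σ(x) ‖f‖_H` where
`σ(x)² = K(x,x) − K(x,X) A⁻¹ K(X,x)`.  The RKHS is modeled by a real inner
product space `H` with kernel sections `k : Ω → H`, evaluation `f(y)=⟪f,k y⟫`. -/
theorem stmt_6 {Ω : Type*} {H : Type*} [NormedAddCommGroup H] [InnerProductSpace ℝ H]
    (k : Ω → H) (f : H) (N : ℕ) (X : Fin N → Ω) (x : Ω) (σsq : ℝ) (hσ : 0 < σsq) :
    let G : Matrix (Fin N) (Fin N) ℝ := Matrix.of fun i j => ⟪k (X i), k (X j)⟫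
    let A : Matrix (Fin N) (Fin N) ℝ := G + σsq • (1 : Matrix (Fin N) (Fin N) ℝ)
    let kx : Fin N → ℝ := fun i => ⟪k (X i), k x⟫
    let φ : Fin N → ℝ := A⁻¹ *ᵥ kx
    |⟪f, k x⟫ - ∑ i, φ i * ⟪f, k (X i)⟫| ≤
      Real.sqrt (⟪k x, k x⟫ - kx ⬝ᵥ (A⁻¹ *ᵥ kx)) * ‖f‖ := by
  intro G A kx φ
  -- G is positive semidefinite (Gram matrix)
  have hG : G.PosSemidef := by
    rw [Matrix.posSemidef_iff_dotProduct_mulVec]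
    constructor
    · ext i j
      simp [G, Matrix.conjTranspose, real_inner_comm]
    · intro v
      have hid : star v ⬝ᵥ (G *ᵥ v) = ⟪∑ i, v i • k (X i), ∑ j, v j • k (X j)⟫ := by
        simp only [dotProduct, Matrix.mulVec, G, sum_inner, inner_sum,
          real_inner_smul_left, real_inner_smul_right, Matrix.of_apply, Pi.star_apply,
          star_trivial, Finset.mul_sum]
        exact Finset.sum_congr rfl fun i _ => Finset.sum_congr rfl fun j _ => by rw [real_inner_comm]; ring
      have h0 : (0:ℝ) ≤ star v ⬝ᵥ (G *ᵥ v) := hid ▸ real_inner_self_nonneg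
      simpa using h0
  have hI : (σsq • (1 : Matrix (Fin N) (Fin N) ℝ)).PosDef := by
    rw [Matrix.posDef_iff_dotProduct_mulVec]
    constructor
    · ext i j
      simp [Matrix.conjTranspose, Matrix.one_apply]
    · intro v hv
      have hid : star v ⬝ᵥ ((σsq • (1 : Matrix (Fin N) (Fin N) ℝ)) *ᵥ v)
          = σsq * ∑ i, v i * v i := by
        simp [dotProduct, Matrix.smul_mulVec, Matrix.one_mulVec,
          Finset.mul_sum]
        exact Finset.sum_congr rfl fun i _ => by ring
      obtain ⟨i, hi⟩ := Function.ne_iff.mp hv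
      have hvpos : 0 < ∑ i, v i * v i :=
        Finset.sum_pos' (fun j _ => mul_self_nonneg _)
          ⟨i, Finset.mem_univ i, mul_self_pos.mpr hi⟩
      have h0 : (0:ℝ) < star v ⬝ᵥ ((σsq • (1 : Matrix (Fin N) (Fin N) ℝ)) *ᵥ v) :=
        hid ▸ mul_pos hσ hvpos
      simpa using h0
  have hA : A.PosDef := Matrix.PosDef.posSemidef_add hG hI
  have hAunit : IsUnit A := hA.isUnit
  have hAφ : A *ᵥ φ = kx := by
    show A *ᵥ (A⁻¹ *ᵥ kx) = kx
    rw [Matrix.mulVec_mulVec,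
      Matrix.mul_nonsing_inv _ ((Matrix.isUnit_iff_isUnit_det _).mp hAunit),
      Matrix.one_mulVec]
  -- componentwise identity from A φ = kx
  have hcomp : ∀ i, (∑ j, φ j * ⟪k (X i), k (X j)⟫) = kx i - σsq * φ i := by
    intro i
    have h := congrFun hAφ i
    simp only [A, Matrix.add_mulVec, Matrix.smul_mulVec, Matrix.one_mulVec,
      Pi.add_apply, Pi.smul_apply, smul_eq_mul] at h
    have h2 : (G *ᵥ φ) i = ∑ j, φ j * ⟪k (X i), k (X j)⟫ := by
      simp [Matrix.mulVec, dotProduct, G, mul_comm]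
    rw [h2] at h
    linarith
  -- the residual element
  set g : H := k x - ∑ i, φ i • k (X i) with hg
  have hfg : ⟪f, k x⟫ - ∑ i, φ i * ⟪f, k (X i)⟫ = ⟪f, g⟫ := by
    simp [hg, inner_sub_right, inner_sum, real_inner_smul_right, mul_comm]
  set S : ℝ := ∑ i, φ i * kx i with hS
  have h2 : ⟪k x, ∑ i, φ i • k (X i)⟫ = S := by
    simp [hS, inner_sum, real_inner_smul_right, kx, real_inner_comm (k x), mul_comm]
  have h3 : ⟪(∑ i, φ i • k (X i)), k x⟫ = S := by
    rw [real_inner_comm]; exact h2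
  have h4 : ⟪(∑ i, φ i • k (X i)), (∑ j, φ j • k (X j))⟫
      = S - σsq * ∑ i, φ i * φ i := by
    rw [sum_inner]
    have : ∀ i, ⟪φ i • k (X i), ∑ j, φ j • k (X j)⟫ = φ i * (kx i - σsq * φ i) := by
      intro i
      rw [real_inner_smul_left, inner_sum]
      congr 1
      rw [← hcomp i]
      exact Finset.sum_congr rfl fun j _ => by rw [real_inner_smul_right]
    simp only [this, hS]
    rw [Finset.mul_sum, ← Finset.sum_sub_distrib]
    exact Finset.sum_congr rfl fun i _ => by ring
  have hgg : ⟪g, g⟫ ≤ ⟪k x, k x⟫ - kx ⬝ᵥ (A⁻¹ *ᵥ kx) := by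
    have hdot : kx ⬝ᵥ (A⁻¹ *ᵥ kx) = S := by
      simp [hS, dotProduct, φ, mul_comm]
    have hexp : ⟪g, g⟫ = ⟪k x, k x⟫ - S - σsq * ∑ i, φ i * φ i := by
      simp only [hg, inner_sub_left, inner_sub_right, h2, h3, h4]
      ring
    have hφ2 : 0 ≤ σsq * ∑ i, φ i * φ i :=
      mul_nonneg hσ.le (Finset.sum_nonneg fun i _ => mul_self_nonneg _)
    rw [hexp, hdot]
    linarith
  have hgnorm : ‖g‖ ≤ Real.sqrt (⟪k x, k x⟫ - kx ⬝ᵥ (A⁻¹ *ᵥ kx)) := by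
    have : ‖g‖ = Real.sqrt ⟪g, g⟫ := by
      rw [real_inner_self_eq_norm_sq, Real.sqrt_sq (norm_nonneg g)]
    rw [this]
    exact Real.sqrt_le_sqrt hgg
  calc |⟪f, k x⟫ - ∑ i, φ i * ⟪f, k (X i)⟫| = |⟪f, g⟫| := by rw [hfg]
    _ ≤ ‖f‖ * ‖g‖ := abs_real_inner_le_norm f g
    _ ≤ ‖f‖ * Real.sqrt (⟪k x, k x⟫ - kx ⬝ᵥ (A⁻¹ *ᵥ kx)) :=
        mul_le_mul_of_nonneg_left hgnorm (norm_nonneg f)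
    _ = _ := mul_comm _ _
end

section
/- Let H be an RKHS with kernel K on Ω, f ∈ H, training data yᵢ = f(xᵢ) + εᵢ with independent εᵢ ∼ N(0,σ_ε²), and let f̂(x) = K(x,X)(K(X,X)+σ_ε²I)⁻¹ Y. Then the pointwise mean squared error satisfies MSE(x) = E[(f(x) − f̂(x))²] ≤ σ(x)² ‖f‖²_H + σ_ε² ‖K(x,X)(K(X,X)+σ_ε²I)⁻¹‖₂², where σ(x)² = K(x,x) − K(x,X)(K(X,X)+σ_ε²I)⁻¹K(X,x). -/
open Matrix MeasureTheory ProbabilityTheory Real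
open scoped NNReal ENNReal RealInnerProductSpace


lemma int_x_exp (b : ℝ) (hb : 0 < b) : Integrable fun x : ℝ => x * exp (-b * x ^ 2) := by
  have := integrable_rpow_mul_exp_neg_mul_sq hb (s := 1) (by norm_num)
  simpa [Real.rpow_one] using this

lemma int_x2_exp (b : ℝ) (hb : 0 < b) : Integrable fun x : ℝ => x ^ 2 * exp (-b * x ^ 2) := by
  have := integrable_rpow_mul_exp_neg_mul_sq hb (s := 2) (by norm_num)
  have h : ∀ x : ℝ, x ^ (2 : ℝ) = x ^ 2 := fun x => by
    rw [show (2:ℝ) = ((2:ℕ):ℝ) by norm_num, Real.rpow_natCast]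
  simpa [h] using this

lemma eval_x_exp (b : ℝ) (hb : 0 < b) : ∫ x : ℝ, x * exp (-b * x ^ 2) = 0 := by
  have hderiv : ∀ x : ℝ, HasDerivAt (fun y : ℝ => -(2 * b)⁻¹ * exp (-b * y ^ 2))
      (x * exp (-b * x ^ 2)) x := by
    intro x
    have h1 : HasDerivAt (fun y : ℝ => -b * y ^ 2) (-b * (2 * x)) x := by
      simpa using ((hasDerivAt_pow 2 x).const_mul (-b))
    have h2 := (h1.exp).const_mul (-(2 * b)⁻¹)
    refine h2.congr_deriv ?_
    field_simp
  have hf : Integrable fun x : ℝ => -(2 * b)⁻¹ * exp (-b * x ^ 2) :=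
    (integrable_exp_neg_mul_sq hb).const_mul _
  exact integral_eq_zero_of_hasDerivAt_of_integrable hderiv (int_x_exp b hb) hf

lemma eval_x2_exp (b : ℝ) (hb : 0 < b) :
    ∫ x : ℝ, x ^ 2 * exp (-b * x ^ 2) = (2 * b)⁻¹ * Real.sqrt (π / b) := by
  have hderiv : ∀ x : ℝ, HasDerivAt (fun y : ℝ => y * exp (-b * y ^ 2))
      (exp (-b * x ^ 2) - 2 * b * (x ^ 2 * exp (-b * x ^ 2))) x := by
    intro x
    have h1 : HasDerivAt (fun y : ℝ => -b * y ^ 2) (-b * (2 * x)) x := by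
      simpa using ((hasDerivAt_pow 2 x).const_mul (-b))
    have h2 := (hasDerivAt_id x).mul h1.exp
    refine h2.congr_deriv ?_
    simp
    ring
  have hint : Integrable fun x : ℝ =>
      exp (-b * x ^ 2) - 2 * b * (x ^ 2 * exp (-b * x ^ 2)) :=
    (integrable_exp_neg_mul_sq hb).sub ((int_x2_exp b hb).const_mul _)
  have h0 : ∫ x : ℝ, (exp (-b * x ^ 2) - 2 * b * (x ^ 2 * exp (-b * x ^ 2))) = 0 :=
    integral_eq_zero_of_hasDerivAt_of_integrable hderiv hint (int_x_exp b hb)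
  rw [integral_sub (integrable_exp_neg_mul_sq hb) ((int_x2_exp b hb).const_mul _),
    MeasureTheory.integral_const_mul, integral_gaussian] at h0
  have hb' : (2 * b) ≠ 0 := by positivity
  field_simp at h0 ⊢
  linarith


lemma gauss_withDensity {v : ℝ≥0} (hv : v ≠ 0) (g : ℝ → ℝ) :
    (∫ y, g y ∂(gaussianReal 0 v) = ∫ y, gaussianPDFReal 0 v y * g y) ∧
    (Integrable g (gaussianReal 0 v) ↔ Integrable (fun y => gaussianPDFReal 0 v y * g y)) := by
  rw [gaussianReal_of_var_ne_zero 0 hv]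
  have hpdf : gaussianPDF 0 v = fun x => ((gaussianPDFReal 0 v x).toNNReal : ℝ≥0∞) := rfl
  have hmeas : Measurable fun x => (gaussianPDFReal 0 v x).toNNReal :=
    (measurable_gaussianPDFReal 0 v).real_toNNReal
  have hsmul : ∀ y : ℝ, (gaussianPDFReal 0 v y).toNNReal • g y = gaussianPDFReal 0 v y * g y := by
    intro y
    rw [NNReal.smul_def, smul_eq_mul, Real.coe_toNNReal _ (gaussianPDFReal_nonneg 0 v y)]
  constructor
  · rw [hpdf, integral_withDensity_eq_integral_smul hmeas]
    exact integral_congr_ae (ae_of_all _ hsmul)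
  · rw [hpdf, integrable_withDensity_iff_integrable_smul hmeas]
    exact integrable_congr (ae_of_all _ hsmul)

lemma gauss_pdf_eq {v : ℝ≥0} (hv : v ≠ 0) (y : ℝ) :
    gaussianPDFReal 0 v y = (Real.sqrt (2 * π * v))⁻¹ * exp (-(2 * (v:ℝ))⁻¹ * y ^ 2) := by
  have hv' : (0:ℝ) < v := lt_of_le_of_ne (v.coe_nonneg) (by exact_mod_cast (Ne.symm hv))
  rw [gaussianPDFReal]
  congr 1
  rw [sub_zero]
  field_simp

lemma gauss_moment1 {v : ℝ≥0} (hv : v ≠ 0) :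
    Integrable (fun y => y) (gaussianReal 0 v) ∧ ∫ y, y ∂(gaussianReal 0 v) = 0 := by
  have hv' : (0:ℝ) < v := lt_of_le_of_ne (v.coe_nonneg) (by exact_mod_cast (Ne.symm hv))
  have hb : (0:ℝ) < (2 * (v:ℝ))⁻¹ := by positivity
  have heq : ∀ y : ℝ, gaussianPDFReal 0 v y * y
      = (Real.sqrt (2 * π * v))⁻¹ * (y * exp (-(2 * (v:ℝ))⁻¹ * y ^ 2)) := by
    intro y; rw [gauss_pdf_eq hv]; ring
  obtain ⟨hint, hiff⟩ := gauss_withDensity hv (fun y => y)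
  constructor
  · rw [hiff]
    refine Integrable.congr (((int_x_exp _ hb).const_mul ((Real.sqrt (2 * π * v))⁻¹))) ?_
    exact ae_of_all _ fun y => (heq y).symm
  · rw [hint, integral_congr_ae (ae_of_all _ heq), MeasureTheory.integral_const_mul,
      eval_x_exp _ hb, mul_zero]

lemma gauss_moment2 {v : ℝ≥0} (hv : v ≠ 0) :
    Integrable (fun y => y ^ 2) (gaussianReal 0 v) ∧ ∫ y, y ^ 2 ∂(gaussianReal 0 v) = v := by
  have hv' : (0:ℝ) < v := lt_of_le_of_ne (v.coe_nonneg) (by exact_mod_cast (Ne.symm hv))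
  have hb : (0:ℝ) < (2 * (v:ℝ))⁻¹ := by positivity
  have heq : ∀ y : ℝ, gaussianPDFReal 0 v y * y ^ 2
      = (Real.sqrt (2 * π * v))⁻¹ * (y ^ 2 * exp (-(2 * (v:ℝ))⁻¹ * y ^ 2)) := by
    intro y; rw [gauss_pdf_eq hv]; ring
  obtain ⟨hint, hiff⟩ := gauss_withDensity hv (fun y => y ^ 2)
  refine ⟨?_, ?_⟩
  · rw [hiff]
    refine Integrable.congr (((int_x2_exp _ hb).const_mul ((Real.sqrt (2 * π * v))⁻¹))) ?_
    exact ae_of_all _ fun y => (heq y).symm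
  · rw [hint, integral_congr_ae (ae_of_all _ heq), MeasureTheory.integral_const_mul,
      eval_x2_exp _ hb]
    have h2b : (2 * (2 * (v:ℝ))⁻¹)⁻¹ = v := by field_simp
    have hpib : π / (2 * (v:ℝ))⁻¹ = 2 * π * v := by field_simp
    rw [h2b, hpib]
    have hs : Real.sqrt (2 * π * v) ≠ 0 := by positivity
    field_simp

/-- Pointwise MSE bound for GP regression with noisy data `yᵢ = f(xᵢ) + εᵢ`:
`E[(f(x) − f̂(x))²] ≤ σ(x)² ‖f‖²_H + σ_ε² ‖K(x,X)(K(X,X)+σ_ε²I)⁻¹‖₂²`, where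
`σ(x)² = K(x,x) − K(x,X)(K(X,X)+σ_ε²I)⁻¹K(X,x)`.  The RKHS is modeled by a real
inner product space `H` with kernel sections `k : Ω → H`, evaluation
`f(y) = ⟪f, k y⟫`; the expectation is over the Gaussian noise. -/
theorem stmt_8 {Θ : Type*} [MeasurableSpace Θ] (μ : Measure Θ) [IsProbabilityMeasure μ]
    {Ω : Type*} {H : Type*} [NormedAddCommGroup H] [InnerProductSpace ℝ H]
    (k : Ω → H) (f : H) (N : ℕ) (X : Fin N → Ω) (x : Ω)
    (v : ℝ≥0) (hv : 0 < v) (ε : Fin N → Θ → ℝ)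
    (hmeas : ∀ i, Measurable (ε i))
    (hind : iIndepFun ε μ)
    (hgauss : ∀ i, Measure.map (ε i) μ = gaussianReal 0 v) :
    let G : Matrix (Fin N) (Fin N) ℝ := Matrix.of fun i j => ⟪k (X i), k (X j)⟫
    let A : Matrix (Fin N) (Fin N) ℝ := G + (v : ℝ) • (1 : Matrix (Fin N) (Fin N) ℝ)
    let kx : Fin N → ℝ := fun i => ⟪k (X i), k x⟫
    let φ : Fin N → ℝ := A⁻¹ *ᵥ kx
    let Y : Θ → Fin N → ℝ := fun θ i => ⟪f, k (X i)⟫ + ε i θ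
    let fhat : Θ → ℝ := fun θ => kx ⬝ᵥ (A⁻¹ *ᵥ Y θ)
    ∫ θ, (⟪f, k x⟫ - fhat θ) ^ 2 ∂μ ≤
      (⟪k x, k x⟫ - kx ⬝ᵥ (A⁻¹ *ᵥ kx)) * ‖f‖ ^ 2 + (v : ℝ) * ∑ i, (φ i) ^ 2 := by
  intro G A kx φ Y fhat
  have hv0 : (v : ℝ≥0) ≠ 0 := hv.ne'
  have hvR : (0:ℝ) < v := by exact_mod_cast hv
  -- matrix facts
  have hGsym : Gᵀ = G := by
    ext i j
    simp only [transpose_apply, G, Matrix.of_apply]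
    exact real_inner_comm _ _
  have hAsym : Aᵀ = A := by
    show (G + (v:ℝ) • (1 : Matrix (Fin N) (Fin N) ℝ))ᵀ = _
    rw [Matrix.transpose_add, Matrix.transpose_smul, Matrix.transpose_one, hGsym]
  -- Gram quadratic form
  have hGquad : ∀ z : Fin N → ℝ, z ⬝ᵥ (G *ᵥ z) =
      ⟪∑ i, z i • k (X i), ∑ j, z j • k (X j)⟫ := by
    intro z
    simp only [dotProduct, mulVec, G, Matrix.of_apply, sum_inner, inner_sum,
      real_inner_smul_left, real_inner_smul_right, Finset.mul_sum]
    exact Finset.sum_congr rfl fun i _ => Finset.sum_congr rfl fun j _ => by rw [real_inner_comm (k (X j))]; ring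
  have hApos : A.PosDef := by
    refine Matrix.posDef_iff_dotProduct_mulVec.mpr ⟨?_, ?_⟩
    · show Aᴴ = A
      ext i j
      rw [Matrix.conjTranspose_apply, star_trivial]
      have := congrFun (congrFun hAsym i) j
      rwa [Matrix.transpose_apply] at this
    · intro z hz
      have hst : star z = z := by
        funext i; exact star_trivial _
      have hAz : A *ᵥ z = G *ᵥ z + (v:ℝ) • z := by
        show (G + (v:ℝ) • (1 : Matrix (Fin N) (Fin N) ℝ)) *ᵥ z = _
        rw [Matrix.add_mulVec, Matrix.smul_mulVec, Matrix.one_mulVec]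
      rw [hst, hAz, dotProduct_add]
      have h1 : 0 ≤ z ⬝ᵥ (G *ᵥ z) := by rw [hGquad]; exact real_inner_self_nonneg
      have h2 : 0 < z ⬝ᵥ ((v:ℝ) • z) := by
        have he : z ⬝ᵥ ((v:ℝ) • z) = (v:ℝ) * ∑ i, z i ^ 2 := by
          simp only [dotProduct, Pi.smul_apply, smul_eq_mul, Finset.mul_sum]
          exact Finset.sum_congr rfl fun i _ => by ring
        rw [he]
        obtain ⟨i, hi⟩ := Function.ne_iff.mp hz
        have hsum : 0 < ∑ i, z i ^ 2 := by
          refine Finset.sum_pos' (fun j _ => sq_nonneg _) ⟨i, Finset.mem_univ i, ?_⟩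
          exact pow_two_pos_of_ne_zero hi
        positivity
      linarith
  have hU : IsUnit A.det := hApos.det_pos.ne'.isUnit
  have hAφ : A *ᵥ φ = kx := by
    show A *ᵥ (A⁻¹ *ᵥ kx) = kx
    rw [Matrix.mulVec_mulVec, Matrix.mul_nonsing_inv _ hU, Matrix.one_mulVec]
  have hφdot : ∀ u : Fin N → ℝ, kx ⬝ᵥ (A⁻¹ *ᵥ u) = ∑ i, φ i * u i := by
    intro u
    rw [Matrix.dotProduct_mulVec, ← Matrix.mulVec_transpose, Matrix.transpose_nonsing_inv, hAsym]
    rfl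
  set m : Fin N → ℝ := fun i => ⟪f, k (X i)⟫ with hm
  set S : Θ → ℝ := fun θ => ∑ i, φ i * ε i θ with hS
  set c : ℝ := ⟪f, k x⟫ - ∑ i, φ i * m i with hc
  -- rewrite integrand
  have hfhat : ∀ θ, fhat θ = (∑ i, φ i * m i) + S θ := by
    intro θ
    show kx ⬝ᵥ (A⁻¹ *ᵥ (fun i => m i + ε i θ)) = _
    have h1 : (fun i => m i + ε i θ) = (m + fun i => ε i θ) := rfl
    rw [h1, Matrix.mulVec_add, dotProduct_add, hφdot, hφdot]
  have hintegrand : ∀ θ, (⟪f, k x⟫ - fhat θ) ^ 2 = c ^ 2 - 2 * c * S θ + S θ ^ 2 := by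
    intro θ; rw [hfhat θ]; ring
  -- probabilistic facts
  have hεint : ∀ i, Integrable (ε i) μ := by
    intro i
    have := (integrable_map_measure
      (by rw [hgauss i]; exact measurable_id.aestronglyMeasurable) (hmeas i).aemeasurable).mp
    rw [hgauss i] at this
    exact this (gauss_moment1 hv0).1
  have hεmean : ∀ i, ∫ θ, ε i θ ∂μ = 0 := by
    intro i
    have := integral_map (hmeas i).aemeasurable
      (f := fun y : ℝ => y) (by rw [hgauss i]; exact measurable_id.aestronglyMeasurable)
    rw [hgauss i] at this
    rw [← this, (gauss_moment1 hv0).2]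
  have hεsqint : ∀ i, Integrable (fun θ => ε i θ ^ 2) μ := by
    intro i
    have := (integrable_map_measure
      (f := ε i) (g := fun y : ℝ => y ^ 2)
      (by rw [hgauss i]; exact (measurable_id.pow_const 2).aestronglyMeasurable)
      (hmeas i).aemeasurable).mp
    rw [hgauss i] at this
    exact this (gauss_moment2 hv0).1
  have hεsq : ∀ i, ∫ θ, ε i θ ^ 2 ∂μ = v := by
    intro i
    have := integral_map (hmeas i).aemeasurable
      (f := fun y : ℝ => y ^ 2) (by rw [hgauss i]; exact (measurable_id.pow_const 2).aestronglyMeasurable)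
    rw [hgauss i] at this
    rw [← this, (gauss_moment2 hv0).2]
  have hprodint : ∀ i j, Integrable (fun θ => ε i θ * ε j θ) μ := by
    intro i j
    rcases eq_or_ne i j with rfl | hij
    · exact (hεsqint i).congr (ae_of_all _ fun θ => pow_two (ε i θ))
    · exact ((hind.indepFun hij).integrable_mul (hεint i) (hεint j))
  have hprodzero : ∀ i j, i ≠ j → ∫ θ, ε i θ * ε j θ ∂μ = 0 := by
    intro i j hij
    have h1 : ∫ θ, ε i θ * ε j θ ∂μ = integral μ (ε i * ε j) := rfl
    rw [h1, (hind.indepFun hij).integral_mul_eq_mul_integral (hεint i).aestronglyMeasurable (hεint j).aestronglyMeasurable]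
    have h2 : integral μ (ε i) = 0 := hεmean i
    rw [h2, zero_mul]
  -- integrability of S and S^2
  have hSint : Integrable S μ := by
    refine integrable_finset_sum _ fun i _ => ?_
    exact (hεint i).const_mul _
  have hSmean : ∫ θ, S θ ∂μ = 0 := by
    rw [hS]
    rw [integral_finset_sum _ fun i _ => (hεint i).const_mul _]
    simp [MeasureTheory.integral_const_mul, hεmean]
  have hSsq_eq : ∀ θ, S θ ^ 2 = ∑ i, ∑ j, (φ i * φ j) * (ε i θ * ε j θ) := by
    intro θ
    rw [hS, sq, Finset.sum_mul_sum]
    exact Finset.sum_congr rfl fun i _ => Finset.sum_congr rfl fun j _ => by ring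
  have hSsqint : Integrable (fun θ => S θ ^ 2) μ := by
    refine Integrable.congr ?_ (ae_of_all _ fun θ => (hSsq_eq θ).symm)
    refine integrable_finset_sum _ fun i _ => integrable_finset_sum _ fun j _ => ?_
    exact (hprodint i j).const_mul _
  have hSsqmean : ∫ θ, S θ ^ 2 ∂μ = (v:ℝ) * ∑ i, φ i ^ 2 := by
    rw [integral_congr_ae (ae_of_all _ hSsq_eq)]
    rw [integral_finset_sum _ fun i _ => integrable_finset_sum _ fun j _ => (hprodint i j).const_mul _]
    have : ∀ i : Fin N, ∫ θ, ∑ j, (φ i * φ j) * (ε i θ * ε j θ) ∂μ = (φ i)^2 * v := by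
      intro i
      rw [integral_finset_sum _ fun j _ => (hprodint i j).const_mul _]
      rw [Finset.sum_eq_single i]
      · rw [MeasureTheory.integral_const_mul]
        rw [integral_congr_ae (ae_of_all _ fun θ => (sq (ε i θ)).symm)]
        rw [hεsq i]; ring
      · intro j _ hji
        rw [MeasureTheory.integral_const_mul, hprodzero i j (Ne.symm hji), mul_zero]
      · intro h; exact absurd (Finset.mem_univ i) h
    rw [Finset.sum_congr rfl fun i _ => this i, ← Finset.sum_mul]
    ring
  -- total integral
  have htotal : ∫ θ, (⟪f, k x⟫ - fhat θ) ^ 2 ∂μ = c ^ 2 + (v:ℝ) * ∑ i, φ i ^ 2 := by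
    rw [integral_congr_ae (ae_of_all _ hintegrand)]
    have hI2 : Integrable (fun θ => 2 * c * S θ) μ := hSint.const_mul _
    have hI1 : Integrable (fun θ => c ^ 2 - 2 * c * S θ) μ := (integrable_const _).sub hI2
    rw [integral_add hI1 hSsqint, integral_sub (integrable_const _) hI2,
      MeasureTheory.integral_const_mul, hSmean, hSsqmean, integral_const]
    simp
  -- deterministic bound
  set h : H := k x - ∑ i, φ i • k (X i) with hh
  have hch : c = ⟪f, h⟫ := by
    rw [hh, inner_sub_right, inner_sum, hc]
    congr 1
    exact Finset.sum_congr rfl fun i _ => (real_inner_smul_right _ _ _).symm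
  have hGφ : ∀ i, (∑ j, G i j * φ j) = kx i - (v:ℝ) * φ i := by
    intro i
    have h1 : (A *ᵥ φ) i = kx i := congrFun hAφ i
    have h2 : (A *ᵥ φ) i = (∑ j, G i j * φ j) + (v:ℝ) * φ i := by
      show ((G + (v:ℝ) • (1 : Matrix (Fin N) (Fin N) ℝ)) *ᵥ φ) i = _
      rw [Matrix.add_mulVec, Matrix.smul_mulVec, Matrix.one_mulVec]
      simp [mulVec, dotProduct]
    linarith [h1, h2]
  have hhnorm : ⟪h, h⟫ = ⟪k x, k x⟫ - (∑ i, φ i * kx i) - (v:ℝ) * ∑ i, φ i ^ 2 := by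
    rw [hh, inner_sub_left, inner_sub_right, inner_sub_right]
    have e1 : ⟪k x, ∑ i, φ i • k (X i)⟫ = ∑ i, φ i * kx i := by
      rw [inner_sum]
      exact Finset.sum_congr rfl fun i _ => by
        rw [real_inner_smul_right, real_inner_comm]
    have e2 : ⟪∑ i, φ i • k (X i), k x⟫ = ∑ i, φ i * kx i := by
      exact (real_inner_comm _ _).trans e1
    have e3 : ⟪∑ i, φ i • k (X i), ∑ j, φ j • k (X j)⟫
        = (∑ i, φ i * kx i) - (v:ℝ) * ∑ i, φ i ^ 2 := by
      rw [← hGquad φ]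
      have : φ ⬝ᵥ (G *ᵥ φ) = ∑ i, φ i * (∑ j, G i j * φ j) := rfl
      rw [this, Finset.sum_congr rfl fun i _ => by rw [hGφ i]]
      rw [Finset.sum_congr rfl (fun i _ => mul_sub (φ i) (kx i) ((v:ℝ) * φ i)),
        Finset.sum_sub_distrib, Finset.mul_sum]
      congr 1
      exact Finset.sum_congr rfl fun i _ => by ring
    rw [e1, e2, e3]
    ring
  have hkxdot : kx ⬝ᵥ (A⁻¹ *ᵥ kx) = ∑ i, φ i * kx i := hφdot kx
  have hCS : c ^ 2 ≤ ⟪h, h⟫ * ‖f‖ ^ 2 := by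
    rw [hch, sq]
    calc ⟪f, h⟫ * ⟪f, h⟫ ≤ ⟪f, f⟫ * ⟪h, h⟫ := real_inner_mul_inner_self_le f h
    _ = ⟪h, h⟫ * ‖f‖ ^ 2 := by rw [real_inner_self_eq_norm_sq]; ring
  have hhle : ⟪h, h⟫ ≤ ⟪k x, k x⟫ - kx ⬝ᵥ (A⁻¹ *ᵥ kx) := by
    rw [hhnorm, hkxdot]
    have : (0:ℝ) ≤ (v:ℝ) * ∑ i, φ i ^ 2 := by positivity
    linarith
  have hfin : c ^ 2 ≤ (⟪k x, k x⟫ - kx ⬝ᵥ (A⁻¹ *ᵥ kx)) * ‖f‖ ^ 2 := by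
    refine hCS.trans ?_
    exact mul_le_mul_of_nonneg_right hhle (by positivity)
  rw [htotal]
  linarith
end

section
/- Let H be an RKHS with kernel K, f ∈ H, data yᵢ = f(xᵢ) + εᵢ with εᵢ i.i.d. N(0,σ_n²), and f̂(x) = K(x,X)(K(X,X)+σ_n²I)⁻¹ Y. Then for every δ ∈ (0,1), with probability at least 1−δ, |f(x) − f̂(x)| ≤ σ(x)‖f‖_H + σ_n ‖K(x,X)(K(X,X)+σ_n²I)⁻¹‖₂ √(2 log(2/δ)). -/
open Matrix MeasureTheory ProbabilityTheory
open scoped NNReal RealInnerProductSpace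

section aux

lemma gauss_pdf_mul' (v : ℝ≥0) (hv : v ≠ 0) (c x : ℝ) :
    gaussianPDFReal 0 v x * Real.exp (c * x)
      = Real.exp ((v : ℝ) * c ^ 2 / 2) * gaussianPDFReal ((v : ℝ) * c) v x := by
  have hv' : (0 : ℝ) < (v : ℝ) := by exact_mod_cast hv.bot_lt
  unfold gaussianPDFReal
  rw [mul_assoc, ← Real.exp_add]
  conv_rhs => rw [mul_comm, mul_assoc, ← Real.exp_add]
  congr 1
  field_simp
  ring

lemma integral_exp_mul_gaussian' (v : ℝ≥0) (hv : v ≠ 0) (c : ℝ) :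
    ∫ x, Real.exp (c * x) ∂(gaussianReal 0 v) = Real.exp ((v : ℝ) * c ^ 2 / 2) := by
  rw [gaussianReal_of_var_ne_zero 0 hv]
  have h : gaussianPDF 0 v = fun x => (((gaussianPDFReal 0 v x).toNNReal : ℝ≥0) : ENNReal) := rfl
  rw [h, integral_withDensity_eq_integral_smul
    ((measurable_gaussianPDFReal 0 v).real_toNNReal) _]
  have : ∀ x, ((gaussianPDFReal 0 v x).toNNReal : ℝ≥0) • Real.exp (c * x)
      = Real.exp ((v : ℝ) * c ^ 2 / 2) * gaussianPDFReal ((v : ℝ) * c) v x := by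
    intro x
    rw [NNReal.smul_def, smul_eq_mul, Real.coe_toNNReal _ (gaussianPDFReal_nonneg 0 v x)]
    exact gauss_pdf_mul' v hv c x
  simp_rw [this]
  rw [integral_const_mul, integral_gaussianPDFReal_eq_one _ hv, mul_one]

lemma integrable_exp_mul_gaussian' (v : ℝ≥0) (hv : v ≠ 0) (c : ℝ) :
    Integrable (fun x => Real.exp (c * x)) (gaussianReal 0 v) := by
  rw [gaussianReal_of_var_ne_zero 0 hv]
  rw [integrable_withDensity_iff (measurable_gaussianPDF 0 v)
    (ae_of_all _ fun x => ENNReal.ofReal_lt_top)]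
  have : ∀ x, Real.exp (c * x) * (gaussianPDF 0 v x).toReal
      = Real.exp ((v : ℝ) * c ^ 2 / 2) * gaussianPDFReal ((v : ℝ) * c) v x := by
    intro x
    rw [gaussianPDF, ENNReal.toReal_ofReal (gaussianPDFReal_nonneg 0 v x), mul_comm]
    exact gauss_pdf_mul' v hv c x
  simp_rw [this]
  exact (integrable_gaussianPDFReal _ _).const_mul _

variable {Θ : Type*} [MeasurableSpace Θ] {μ : Measure Θ}

lemma my_mgf_gauss' {e : Θ → ℝ} (hm : Measurable e) {v : ℝ≥0} (hv : v ≠ 0)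
    (hg : Measure.map e μ = gaussianReal 0 v) (c : ℝ) :
    mgf e μ c = Real.exp ((v : ℝ) * c ^ 2 / 2) := by
  have h1 : ∫ x, Real.exp (c * x) ∂(Measure.map e μ) = ∫ θ, Real.exp (c * e θ) ∂μ :=
    integral_map hm.aemeasurable (Measurable.aestronglyMeasurable (by fun_prop))
  rw [hg, integral_exp_mul_gaussian' v hv] at h1
  rw [mgf, ← h1]

lemma my_integrable_gauss' {e : Θ → ℝ} (hm : Measurable e) {v : ℝ≥0} (hv : v ≠ 0)
    (hg : Measure.map e μ = gaussianReal 0 v) (c : ℝ) :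
    Integrable (fun θ => Real.exp (c * e θ)) μ := by
  have := integrable_exp_mul_gaussian' v hv c
  rw [← hg] at this
  exact (integrable_map_measure (Measurable.aestronglyMeasurable (by fun_prop))
    hm.aemeasurable).mp this

lemma my_chernoff' [IsProbabilityMeasure μ] {N : ℕ} (φ : Fin N → ℝ) {v : ℝ≥0} (hv : v ≠ 0)
    (ε : Fin N → Θ → ℝ) (hmeas : ∀ i, Measurable (ε i))
    (hind : iIndepFun ε μ)
    (hgauss : ∀ i, Measure.map (ε i) μ = gaussianReal 0 v)
    {a : ℝ} (ha : 0 ≤ a) (hs : 0 < ∑ i, φ i ^ 2) :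
    (μ {θ | a ≤ ∑ i, φ i * ε i θ}).toReal
      ≤ Real.exp (- a ^ 2 / (2 * (v : ℝ) * ∑ i, φ i ^ 2)) := by
  set s2 := ∑ i, φ i ^ 2 with hs2
  have hv' : (0 : ℝ) < (v : ℝ) := by exact_mod_cast hv.bot_lt
  set t := a / ((v : ℝ) * s2) with ht
  have ht0 : 0 ≤ t := div_nonneg ha (by positivity)
  set Z : Fin N → Θ → ℝ := fun i θ => φ i * ε i θ with hZ
  have hZmeas : ∀ i, Measurable (Z i) := fun i => (hmeas i).const_mul (φ i)
  have hZind : iIndepFun Z μ :=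
    hind.comp (fun i x => φ i * x) (fun i => measurable_const_mul (φ i))
  have hmgf : ∀ (i : Fin N) (c : ℝ), mgf (Z i) μ c = Real.exp ((v : ℝ) * (c * φ i) ^ 2 / 2) := by
    intro i c
    have h1 : mgf (ε i) μ (c * φ i) = Real.exp ((v : ℝ) * (c * φ i) ^ 2 / 2) :=
      my_mgf_gauss' (hmeas i) hv (hgauss i) _
    rw [← h1, mgf, mgf]
    congr 1 with θ
    simp [hZ]; ring_nf
  have hint : ∀ (i : Fin N) (c : ℝ), Integrable (fun θ => Real.exp (c * Z i θ)) μ := by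
    intro i c
    have := my_integrable_gauss' (hmeas i) hv (hgauss i) (c * φ i)
    refine this.congr ?_
    filter_upwards with θ
    simp [hZ]; ring_nf
  have hmgfZ : mgf (∑ i, Z i) μ t = Real.exp ((v : ℝ) * t ^ 2 * s2 / 2) := by
    rw [iIndepFun.mgf_sum hZind hZmeas]
    calc ∏ i, mgf (Z i) μ t = ∏ i, Real.exp ((v : ℝ) * t ^ 2 / 2 * φ i ^ 2) := by
          refine Finset.prod_congr rfl fun i _ => ?_
          rw [hmgf i t]; congr 1; ring
      _ = Real.exp (∑ i, (v : ℝ) * t ^ 2 / 2 * φ i ^ 2) := (Real.exp_sum _ _).symm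
      _ = _ := by rw [← Finset.mul_sum, ← hs2]; congr 1; ring
  have hsum : (fun θ => ∑ i, φ i * ε i θ) = ∑ i, Z i := by
    ext θ; simp [hZ]
  have hcher := measure_ge_le_exp_mul_mgf (X := ∑ i, Z i) (μ := μ) a ht0
    (iIndepFun.integrable_exp_mul_sum hZind hZmeas (fun i _ => hint i t))
  rw [hmgfZ] at hcher
  have heq : Real.exp (-t * a) * Real.exp ((v : ℝ) * t ^ 2 * s2 / 2)
      = Real.exp (- a ^ 2 / (2 * (v : ℝ) * s2)) := by
    rw [← Real.exp_add]
    congr 1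
    rw [ht]
    field_simp
    ring
  calc (μ {θ | a ≤ ∑ i, φ i * ε i θ}).toReal
      = (μ {θ | a ≤ (∑ i, Z i) θ}).toReal := by rw [funext_iff] at hsum; simp_rw [hsum]
    _ ≤ _ := heq ▸ hcher

end aux

/-- High-probability pointwise error bound for GP regression with noisy data
`yᵢ = f(xᵢ) + εᵢ`, `εᵢ` i.i.d. `N(0, σ_n²)`: for every `δ ∈ (0,1)`, with
probability at least `1 − δ`,
`|f(x) − f̂(x)| ≤ σ(x)‖f‖_H + σ_n ‖K(x,X)(K(X,X)+σ_n²I)⁻¹‖₂ √(2 log(2/δ))`.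
The RKHS is modeled by a real inner product space `H` with kernel sections
`k : Ω → H`, evaluation `f(y) = ⟪f, k y⟫`. -/
theorem stmt_9 {Θ : Type*} [MeasurableSpace Θ] (μ : Measure Θ) [IsProbabilityMeasure μ]
    {Ω : Type*} {H : Type*} [NormedAddCommGroup H] [InnerProductSpace ℝ H]
    (k : Ω → H) (f : H) (N : ℕ) (X : Fin N → Ω) (x : Ω)
    (v : ℝ≥0) (hv : 0 < v) (ε : Fin N → Θ → ℝ)
    (hmeas : ∀ i, Measurable (ε i))
    (hind : iIndepFun ε μ)
    (hgauss : ∀ i, Measure.map (ε i) μ = gaussianReal 0 v)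
    (δ : ℝ) (hδ : δ ∈ Set.Ioo (0 : ℝ) 1) :
    let G : Matrix (Fin N) (Fin N) ℝ := Matrix.of fun i j => ⟪k (X i), k (X j)⟫
    let A : Matrix (Fin N) (Fin N) ℝ := G + (v : ℝ) • (1 : Matrix (Fin N) (Fin N) ℝ)
    let kx : Fin N → ℝ := fun i => ⟪k (X i), k x⟫
    let φ : Fin N → ℝ := A⁻¹ *ᵥ kx
    let Y : Θ → Fin N → ℝ := fun θ i => ⟪f, k (X i)⟫ + ε i θ
    let fhat : Θ → ℝ := fun θ => kx ⬝ᵥ (A⁻¹ *ᵥ Y θ)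
    ENNReal.ofReal (1 - δ) ≤
      μ {θ | |⟪f, k x⟫ - fhat θ| ≤
        Real.sqrt (⟪k x, k x⟫ - kx ⬝ᵥ (A⁻¹ *ᵥ kx)) * ‖f‖ +
          Real.sqrt v * Real.sqrt (∑ i, (φ i) ^ 2) * Real.sqrt (2 * Real.log (2 / δ))} := by
  intro G A kx φ Y fhat
  obtain ⟨hδ0, hδ1⟩ := hδ
  have hv0 : v ≠ 0 := hv.ne'
  have hv' : (0 : ℝ) < (v : ℝ) := by exact_mod_cast hv
  -- notation
  have hG : ∀ i j, G i j = ⟪k (X i), k (X j)⟫ := fun i j => rfl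
  have hkxdef : ∀ i, kx i = ⟪k (X i), k x⟫ := fun i => rfl
  set m : Fin N → ℝ := fun i => ⟪f, k (X i)⟫ with hm
  set s2 : ℝ := ∑ i, φ i ^ 2 with hs2
  have hs2nn : 0 ≤ s2 := Finset.sum_nonneg fun i _ => sq_nonneg _
  set L : ℝ := 2 * Real.log (2 / δ) with hL
  have hLnn : 0 ≤ L := by
    have : (1 : ℝ) ≤ 2 / δ := by
      rw [le_div_iff₀ hδ0]; linarith
    have := Real.log_nonneg this
    positivity
  set a : ℝ := Real.sqrt v * Real.sqrt s2 * Real.sqrt L with ha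
  have hann : 0 ≤ a := by positivity
  -- A is symmetric
  have hAsymm : Aᵀ = A := by
    show (G + (v : ℝ) • (1 : Matrix (Fin N) (Fin N) ℝ))ᵀ = _
    rw [Matrix.transpose_add, Matrix.transpose_smul, Matrix.transpose_one]
    congr 1
    ext i j
    exact real_inner_comm _ _
  have hAinvsymm : (A⁻¹)ᵀ = A⁻¹ := by rw [Matrix.transpose_nonsing_inv, hAsymm]
  -- kx ⬝ᵥ (A⁻¹ *ᵥ u) = φ ⬝ᵥ u
  have hφdot : ∀ u : Fin N → ℝ, kx ⬝ᵥ (A⁻¹ *ᵥ u) = φ ⬝ᵥ u := by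
    intro u
    rw [Matrix.dotProduct_mulVec]
    congr 1
    rw [← hAinvsymm, Matrix.vecMul_transpose]
  -- key quadratic inequality
  have hquad : φ ⬝ᵥ (G *ᵥ φ) + (v : ℝ) * s2 ≤ φ ⬝ᵥ kx := by
    by_cases hu : IsUnit A.det
    · have hAφ : A *ᵥ φ = kx := by
        show A *ᵥ (A⁻¹ *ᵥ kx) = kx
        rw [Matrix.mulVec_mulVec, Matrix.mul_nonsing_inv _ hu, Matrix.one_mulVec]
      have : φ ⬝ᵥ kx = φ ⬝ᵥ (G *ᵥ φ) + (v : ℝ) * s2 := by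
        rw [← hAφ]
        show φ ⬝ᵥ ((G + (v : ℝ) • (1 : Matrix (Fin N) (Fin N) ℝ)) *ᵥ φ) = _
        rw [Matrix.add_mulVec, dotProduct_add, Matrix.smul_mulVec,
          Matrix.one_mulVec]
        congr 1
        rw [dotProduct_smul, smul_eq_mul, hs2]
        congr 1
        rw [dotProduct]
        exact Finset.sum_congr rfl fun i _ => (sq (φ i)) ▸ rfl
      linarith
    · have hA0 : A⁻¹ = 0 := Matrix.nonsing_inv_apply_not_isUnit _ hu
      have hφ0 : φ = 0 := by show A⁻¹ *ᵥ kx = 0; rw [hA0, Matrix.zero_mulVec]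
      have hs20 : s2 = 0 := by rw [hs2]; simp [hφ0]
      simp [hφ0, hs20]
  have hGφ : φ ⬝ᵥ (G *ᵥ φ) ≤ φ ⬝ᵥ kx := by nlinarith [mul_nonneg hv'.le hs2nn]
  -- the interpolant in H
  set w : H := ∑ i, φ i • k (X i) with hw
  have hww : ⟪w, w⟫ = φ ⬝ᵥ (G *ᵥ φ) := by
    simp only [hw, sum_inner, inner_sum, real_inner_smul_left, real_inner_smul_right,
      dotProduct, Matrix.mulVec, Matrix.of_apply, Finset.mul_sum]
    refine Finset.sum_congr rfl fun i _ => Finset.sum_congr rfl fun j _ => ?_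
    rw [hG, real_inner_comm (k (X j))]
    ring
  have hwkx : ⟪k x, w⟫ = φ ⬝ᵥ kx := by
    simp only [hw, inner_sum, real_inner_smul_right, dotProduct]
    refine Finset.sum_congr rfl fun i _ => ?_
    rw [hkxdef, real_inner_comm (k x)]
  have hfw : ⟪f, w⟫ = φ ⬝ᵥ m := by
    simp only [hw, inner_sum, real_inner_smul_right, dotProduct, hm]
  -- variance bound
  have hvar : ‖k x - w‖ ^ 2 ≤ ⟪k x, k x⟫ - φ ⬝ᵥ kx := by
    have e1 : ‖k x - w‖ ^ 2 = ‖k x‖ ^ 2 - 2 * ⟪k x, w⟫ + ‖w‖ ^ 2 := norm_sub_sq_real (k x) w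
    have e2 : ⟪k x, k x⟫ = ‖k x‖ ^ 2 := real_inner_self_eq_norm_sq _
    have e3 : ⟪w, w⟫ = ‖w‖ ^ 2 := real_inner_self_eq_norm_sq _
    rw [hwkx] at e1
    rw [hww] at e3
    linarith
  -- deterministic bound
  have hdet : |⟪f, k x⟫ - φ ⬝ᵥ m| ≤ Real.sqrt (⟪k x, k x⟫ - φ ⬝ᵥ kx) * ‖f‖ := by
    rw [← hfw, ← inner_sub_right]
    refine le_trans (abs_real_inner_le_norm f _) ?_
    rw [mul_comm]
    gcongr
    have : ‖k x - w‖ = Real.sqrt (‖k x - w‖ ^ 2) := (Real.sqrt_sq (norm_nonneg _)).symm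
    rw [this]
    exact Real.sqrt_le_sqrt hvar
  -- decomposition of the error
  have hdecomp : ∀ θ, ⟪f, k x⟫ - fhat θ
      = (⟪f, k x⟫ - φ ⬝ᵥ m) - ∑ i, φ i * ε i θ := by
    intro θ
    have : fhat θ = φ ⬝ᵥ m + ∑ i, φ i * ε i θ := by
      show kx ⬝ᵥ (A⁻¹ *ᵥ Y θ) = _
      rw [hφdot (Y θ)]
      show ∑ i, φ i * (m i + ε i θ) = _
      rw [dotProduct, ← Finset.sum_add_distrib]
      exact Finset.sum_congr rfl fun i _ => by ring
    rw [this]; ring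
  -- the good event
  set Z : Θ → ℝ := fun θ => ∑ i, φ i * ε i θ with hZ
  have hZmeas : Measurable Z := by
    apply Finset.measurable_sum
    exact fun i _ => (hmeas i).const_mul (φ i)
  set E : Set Θ := {θ | |Z θ| ≤ a} with hE
  have hEmeas : MeasurableSet E := measurableSet_le (by fun_prop) measurable_const
  -- E is contained in the target event
  have hsub : E ⊆ {θ | |⟪f, k x⟫ - fhat θ| ≤
      Real.sqrt (⟪k x, k x⟫ - kx ⬝ᵥ (A⁻¹ *ᵥ kx)) * ‖f‖ +
        Real.sqrt v * Real.sqrt (∑ i, (φ i) ^ 2) * Real.sqrt (2 * Real.log (2 / δ))} := by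
    intro θ hθ
    have hθ' : |Z θ| ≤ a := hθ
    show |⟪f, k x⟫ - fhat θ| ≤ _
    rw [hdecomp θ]
    rw [hφdot kx]
    calc |(⟪f, k x⟫ - φ ⬝ᵥ m) - Z θ| ≤ |⟪f, k x⟫ - φ ⬝ᵥ m| + |Z θ| := abs_sub _ _
      _ ≤ Real.sqrt (⟪k x, k x⟫ - φ ⬝ᵥ kx) * ‖f‖ + a := add_le_add hdet hθ'
  -- tail bound
  have htail : μ Eᶜ ≤ ENNReal.ofReal δ := by
    rcases eq_or_lt_of_le hs2nn with hs20 | hs2pos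
    · have : ∀ i, φ i = 0 := by
        intro i
        have := (Finset.sum_eq_zero_iff_of_nonneg (fun j _ => sq_nonneg (φ j))).mp hs20.symm
        have := this i (Finset.mem_univ i)
        exact pow_eq_zero_iff (n := 2) (by norm_num) |>.mp this
      have hZ0 : Z = fun _ => 0 := by
        ext θ; rw [hZ]; simp [this]
      have : E = Set.univ := by
        ext θ; simp [hE, hZ0, hann]
      rw [this, Set.compl_univ]
      simp
    · -- s2 > 0
      have ha2 : a ^ 2 = (v : ℝ) * s2 * L := by
        rw [ha, mul_pow, mul_pow, Real.sq_sqrt (by positivity), Real.sq_sqrt hs2nn,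
          Real.sq_sqrt hLnn]
      have hexp : Real.exp (- a ^ 2 / (2 * (v : ℝ) * s2)) = δ / 2 := by
        rw [ha2, hL]
        have h2δ : (0 : ℝ) < 2 / δ := by positivity
        rw [show -((v : ℝ) * s2 * (2 * Real.log (2 / δ))) / (2 * (v : ℝ) * s2)
            = -Real.log (2 / δ) by field_simp]
        rw [Real.exp_neg, Real.exp_log h2δ, inv_div]
      have hup : μ {θ | a ≤ Z θ} ≤ ENNReal.ofReal (δ / 2) := by
        rw [← hexp]
        refine (ENNReal.le_ofReal_iff_toReal_le (measure_ne_top μ _) (Real.exp_nonneg _)).mpr ?_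
        exact my_chernoff' φ hv0 ε hmeas hind hgauss hann hs2pos
      have hdown : μ {θ | Z θ ≤ -a} ≤ ENNReal.ofReal (δ / 2) := by
        have hchern := my_chernoff' (fun i => -φ i) hv0 ε hmeas hind hgauss hann
          (by simpa using hs2pos)
        have hset : {θ | a ≤ ∑ i, (fun i => -φ i) i * ε i θ} = {θ | Z θ ≤ -a} := by
          ext θ
          simp only [Set.mem_setOf_eq, hZ, neg_mul, Finset.sum_neg_distrib]
          constructor <;> intro h <;> linarith
        rw [hset] at hchern
        rw [← hexp]
        refine (ENNReal.le_ofReal_iff_toReal_le (measure_ne_top μ _) (Real.exp_nonneg _)).mpr ?_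
        convert hchern using 3
        simp [hs2]
      have hsubc : Eᶜ ⊆ {θ | a ≤ Z θ} ∪ {θ | Z θ ≤ -a} := by
        intro θ hθ
        have : ¬ |Z θ| ≤ a := hθ
        rw [not_le] at this
        rcases lt_abs.mp this with h | h
        · exact Or.inl h.le
        · exact Or.inr (by simp only [Set.mem_setOf_eq]; linarith)
      calc μ Eᶜ ≤ μ ({θ | a ≤ Z θ} ∪ {θ | Z θ ≤ -a}) := measure_mono hsubc
        _ ≤ μ {θ | a ≤ Z θ} + μ {θ | Z θ ≤ -a} := measure_union_le _ _
        _ ≤ ENNReal.ofReal (δ / 2) + ENNReal.ofReal (δ / 2) := add_le_add hup hdown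
        _ = ENNReal.ofReal δ := by
            rw [← ENNReal.ofReal_add (by positivity) (by positivity)]
            norm_num
  -- conclude
  have h1 : μ E + μ Eᶜ = 1 := (measure_add_measure_compl hEmeas).trans measure_univ
  calc ENNReal.ofReal (1 - δ) = 1 - ENNReal.ofReal δ := by
        rw [ENNReal.ofReal_sub _ hδ0.le, ENNReal.ofReal_one]
    _ ≤ μ E := by
        rw [tsub_le_iff_right]
        calc (1 : ENNReal) = μ E + μ Eᶜ := h1.symm
          _ ≤ μ E + ENNReal.ofReal δ := add_le_add le_rfl htail
    _ ≤ _ := measure_mono hsub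
end
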